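/- For the complete graph K_n on n ≥ 2 vertices, γ(K_n) = n/(n−1). -/

import Mathlib

open Finset SimpleGraph

/-- `max_{uv ∈ E(G)} |x_u - x_v|` (as a real supremum over adjacent pairs). -/
noncomputable def edgeSup {V : Type*} (G : SimpleGraph V) (x : V → ℝ) : ℝ :=
  ⨆ p : {p : V × V // G.Adj p.1 p.2}, |x p.1.1 - x p.1.2|

/-- The `l_∞`-smoothing parameter `γ(G)`. -/
noncomputable def gamma {V : Type*} [Fintype V] (G : SimpleGraph V) : ℝ :=
  sInf {y | ∃ x : V → ℝ, (∑ v, x v) = 0 ∧ (⨆ v, |x v|) = 1 ∧ y = edgeSup G x}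

/-- Transmission of a vertex: sum of graph distances to all vertices. -/
noncomputable def transmission {V : Type*} [Fintype V] (G : SimpleGraph V) (u : V) : ℕ :=
  ∑ v, G.dist u v

lemma key {n : ℕ} (hn : 2 ≤ n) (x : Fin n → ℝ) (hsum : (∑ v, x v) = 0)
    (a : Fin n) (ha : x a = 1) :
    ∃ u, u ≠ a ∧ (n : ℝ) / ((n : ℝ) - 1) ≤ x a - x u := by
  have hn1 : (1 : ℝ) ≤ (n : ℝ) - 1 := by
    have : (2 : ℝ) ≤ (n : ℝ) := by exact_mod_cast hn
    linarith
  have hne : ((n : ℝ) - 1) ≠ 0 := by linarith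
  have hmem : a ∈ (univ : Finset (Fin n)) := mem_univ a
  have hsum' : (∑ v ∈ univ.erase a, x v) = -1 := by
    have := Finset.add_sum_erase univ x hmem
    rw [hsum] at this
    linarith [this, ha]
  have hcard : ((univ : Finset (Fin n)).erase a).card = n - 1 := by
    rw [card_erase_of_mem hmem, card_univ, Fintype.card_fin]
  have hcardR : (((univ : Finset (Fin n)).erase a).card : ℝ) = (n : ℝ) - 1 := by
    rw [hcard]
    have : (1:ℕ) ≤ n := by omega
    push_cast [Nat.cast_sub this]
    ring
  have hsum2 : (∑ v ∈ univ.erase a, x v) ≤ ∑ _v ∈ univ.erase a, (-1 / ((n:ℝ) - 1)) := by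
    rw [hsum', Finset.sum_const, nsmul_eq_mul, hcardR]
    have : ((n:ℝ)-1) * (-1/((n:ℝ)-1)) = -1 := by field_simp
    linarith
  haveI : NeZero n := ⟨by omega⟩
  obtain ⟨u, hu, hule⟩ := Finset.exists_le_of_sum_le
    (⟨(a + 1 : Fin n), by
      refine Finset.mem_erase.mpr ⟨?_, mem_univ _⟩
      intro h
      have h1 : (1 : Fin n) = 0 := by
        have h2 : a + 1 = a + 0 := by rw [add_zero]; exact h
        exact add_left_cancel h2
      have h3 := congrArg Fin.val h1
      simp at h3
      omega⟩ : (univ.erase a).Nonempty) hsum2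
  refine ⟨u, (Finset.mem_erase.mp hu).1, ?_⟩
  rw [ha]
  have : x u ≤ -1 / ((n:ℝ) - 1) := hule
  rw [div_le_iff₀ (by linarith : (0:ℝ) < (n:ℝ) - 1)]
  have : x u * ((n:ℝ) - 1) ≤ -1 := by
    calc x u * ((n:ℝ) - 1) ≤ (-1 / ((n:ℝ)-1)) * ((n:ℝ)-1) := by
          apply mul_le_mul_of_nonneg_right this (by linarith)
      _ = -1 := by field_simp
  nlinarith

theorem stmt2 (n : ℕ) (hn : 2 ≤ n) :
    gamma (⊤ : SimpleGraph (Fin n)) = (n : ℝ) / ((n : ℝ) - 1) := by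
  have hn1 : (1 : ℝ) ≤ (n : ℝ) - 1 := by
    have : (2 : ℝ) ≤ (n : ℝ) := by exact_mod_cast hn
    linarith
  have hpos : (0:ℝ) < (n:ℝ) - 1 := by linarith
  have hne : ((n : ℝ) - 1) ≠ 0 := ne_of_gt hpos
  haveI : NeZero n := ⟨by omega⟩
  have h01 : ((0 : Fin n)) ≠ 1 := by
    intro h
    have := congrArg Fin.val h
    simp [Fin.val_one', Nat.mod_eq_of_lt (by omega : 1 < n)] at this
  haveI hAdjNE : Nonempty {p : Fin n × Fin n // (⊤ : SimpleGraph (Fin n)).Adj p.1 p.2} :=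
    ⟨⟨(0, 1), by simp [h01]⟩⟩
  have hbddE : ∀ x : Fin n → ℝ, BddAbove (Set.range
      fun p : {p : Fin n × Fin n // (⊤ : SimpleGraph (Fin n)).Adj p.1 p.2} =>
        |x p.1.1 - x p.1.2|) := fun x => Set.Finite.bddAbove (Set.finite_range _)
  -- the set
  set S : Set ℝ := {y | ∃ x : Fin n → ℝ, (∑ v, x v) = 0 ∧ (⨆ v, |x v|) = 1 ∧
      y = edgeSup (⊤ : SimpleGraph (Fin n)) x} with hS
  -- witness
  set c : ℝ := -1 / ((n:ℝ) - 1) with hc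
  set x0 : Fin n → ℝ := fun v => if v = 0 then 1 else c with hx0
  have hsum0 : (∑ v, x0 v) = 0 := by
    rw [← Finset.add_sum_erase univ x0 (mem_univ 0)]
    have : (∑ v ∈ univ.erase 0, x0 v) = ((univ.erase (0 : Fin n)).card : ℝ) * c := by
      rw [Finset.sum_congr rfl (fun v hv => ?_), Finset.sum_const, nsmul_eq_mul]
      simp [hx0, (Finset.mem_erase.mp hv).1]
    rw [this, card_erase_of_mem (mem_univ 0), card_univ, Fintype.card_fin]
    have h1n : (1:ℕ) ≤ n := by omega
    rw [Nat.cast_sub h1n]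
    simp only [hx0, if_pos rfl, hc, Nat.cast_one]
    field_simp
    ring
  have hcabs : |c| ≤ 1 := by
    rw [hc, abs_div]
    rw [abs_of_pos hpos]
    rw [div_le_one hpos]
    simp only [abs_neg, abs_one]
    linarith
  have hcneg : c ≤ 0 := by
    rw [hc]; exact div_nonpos_of_nonpos_of_nonneg (by norm_num) (le_of_lt hpos)
  have hc1 : (0:ℝ) ≤ 1 - c := by linarith
  have hsup0 : (⨆ v, |x0 v|) = 1 := by
    apply le_antisymm
    · apply ciSup_le
      intro v
      by_cases h : v = 0 <;> simp [hx0, h, hcabs]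
    · have := le_ciSup (Set.Finite.bddAbove (Set.finite_range fun v => |x0 v|)) (0 : Fin n)
      simpa [hx0] using this
  have hval : ∀ a b : Fin n, a ≠ b → |x0 a - x0 b| ≤ (n:ℝ) / ((n:ℝ) - 1) := by
    intro a b hab
    have hcc : (1 : ℝ) - c = (n:ℝ) / ((n:ℝ)-1) := by
      rw [hc]; field_simp; ring
    have hnn : (0:ℝ) ≤ (n:ℝ)/((n:ℝ)-1) := by positivity
    by_cases h : a = 0
    · have hb : b ≠ 0 := by rw [h] at hab; exact fun hb => hab hb.symm
      simp only [hx0, if_pos h, if_neg hb]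
      rw [abs_of_nonneg hc1, hcc]
    · by_cases h' : b = 0
      · simp only [hx0, if_neg h, if_pos h']
        rw [abs_sub_comm, abs_of_nonneg hc1, hcc]
      · simp only [hx0, if_neg h, if_neg h']
        simpa using hnn
  have hedge0 : edgeSup (⊤ : SimpleGraph (Fin n)) x0 = (n:ℝ) / ((n:ℝ) - 1) := by
    apply le_antisymm
    · apply ciSup_le
      rintro ⟨⟨a, b⟩, hab⟩
      exact hval a b (by simpa using hab)
    · have := le_ciSup (hbddE x0) (⟨(0, 1), by simp [h01]⟩ :
        {p : Fin n × Fin n // (⊤ : SimpleGraph (Fin n)).Adj p.1 p.2})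
      have hcc : (1 : ℝ) - c = (n:ℝ) / ((n:ℝ)-1) := by
        rw [hc]; field_simp; ring
      calc (n:ℝ)/((n:ℝ)-1) = |x0 0 - x0 1| := by
            simp only [hx0, if_pos rfl, if_neg h01.symm]
            rw [abs_of_nonneg hc1, hcc]
        _ ≤ _ := this
  have hmemS : (n:ℝ) / ((n:ℝ) - 1) ∈ S := ⟨x0, hsum0, hsup0, hedge0.symm⟩
  -- lower bound
  have hlb : ∀ y ∈ S, (n:ℝ) / ((n:ℝ) - 1) ≤ y := by
    rintro y ⟨x, hsum, hsup, rfl⟩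
    obtain ⟨a, hamax⟩ := Finite.exists_max (fun v => |x v|)
    have hax : |x a| = 1 := by
      rw [← hsup]
      apply le_antisymm
      · exact le_ciSup (Set.Finite.bddAbove (Set.finite_range fun v => |x v|)) a
      · exact ciSup_le hamax
    have key' : ∀ x' : Fin n → ℝ, (∑ v, x' v) = 0 → x' a = 1 →
        (n:ℝ)/((n:ℝ)-1) ≤ edgeSup (⊤ : SimpleGraph (Fin n)) x' := by
      intro x' hs' ha'
      obtain ⟨u, hu, hle⟩ := key hn x' hs' a ha'
      have hadj : (⊤ : SimpleGraph (Fin n)).Adj a u := by simp [hu.symm]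
      calc (n:ℝ)/((n:ℝ)-1) ≤ x' a - x' u := hle
        _ ≤ |x' a - x' u| := le_abs_self _
        _ ≤ _ := le_ciSup (hbddE x') ⟨(a, u), hadj⟩
    rcases abs_eq (by norm_num : (0:ℝ) ≤ 1) |>.mp hax with h1 | h1
    · exact key' x hsum h1
    · have := key' (fun v => -x v) (by simpa using hsum) (by simp [h1])
      refine this.trans ?_
      apply ciSup_le
      rintro ⟨⟨p, q⟩, hpq⟩
      have : |(-x p) - (-x q)| = |x p - x q| := by rw [← abs_neg]; ring_nf
      rw [this]
      exact le_ciSup (hbddE x) ⟨(p, q), hpq⟩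
  exact le_antisymm (csInf_le ⟨_, hlb⟩ hmemS) (le_csInf ⟨_, hmemS⟩ hlb)
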